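/- For every n ≥ 0 and every real x, B̂_n(x) = Σ_{k=0}^{⌊n/2⌋} 2^k · M(n,k) · (1+x²)^k · (1+x)^{n−2k}, where M(n,k) is the number of permutations of {1,…,n} with exactly k left peaks. -/

import Mathlib

open Finset

/-- Signed permutations of order `n` (the hyperoctahedral group), modeled as a
permutation of `Fin n` together with a sign for each position. -/
abbrev BSigned (n : ℕ) := Equiv.Perm (Fin n) × (Fin n → Bool)

/-- The word of a signed permutation: `bword σ j = σ(j)` for `1 ≤ j ≤ n`,
with the convention `σ(0) = 0`. -/
def bword {n : ℕ} (σ : BSigned n) (j : ℕ) : ℤ :=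
  if h : 1 ≤ j ∧ j ≤ n then
    (if σ.2 ⟨j - 1, by omega⟩ then -1 else 1) * ((σ.1 ⟨j - 1, by omega⟩ : ℕ) + 1)
  else 0

/-- The number of alternating descents of a signed permutation: the number of
`0 ≤ j ≤ n-1` such that `j` is even and `σ(j) < σ(j+1)`, or `j` is odd and `σ(j) > σ(j+1)`. -/
def altdesB {n : ℕ} (σ : BSigned n) : ℕ :=
  ((Finset.range n).filter (fun j => (Even j ∧ bword σ j < bword σ (j + 1)) ∨
      (Odd j ∧ bword σ (j + 1) < bword σ j))).card

/-- The type B alternating Eulerian number `B̂(n,k)`. -/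
def Bhat (n k : ℕ) : ℕ :=
  (Finset.univ.filter (fun σ : BSigned n => altdesB σ = k)).card

/-- The type B alternating Eulerian polynomial `B̂_n(x)` as a real function. -/
noncomputable def Bpoly (n : ℕ) (x : ℝ) : ℝ :=
  ∑ σ : BSigned n, x ^ altdesB σ

/-- The word of a permutation of `{1,…,n}`: `aword π j = π(j)` for `1 ≤ j ≤ n`,
with the convention `π(0) = 0`. -/
def aword {n : ℕ} (π : Equiv.Perm (Fin n)) (j : ℕ) : ℕ :=
  if h : 1 ≤ j ∧ j ≤ n then (π ⟨j - 1, by omega⟩ : ℕ) + 1 else 0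

/-- The number of alternating descents of a permutation: the number of
`1 ≤ j ≤ n-1` such that `j` is odd and `π(j) > π(j+1)`, or `j` is even and `π(j) < π(j+1)`. -/
def altdesA {n : ℕ} (π : Equiv.Perm (Fin n)) : ℕ :=
  ((Finset.Icc 1 (n - 1)).filter (fun j => (Odd j ∧ aword π (j + 1) < aword π j) ∨
      (Even j ∧ aword π j < aword π (j + 1)))).card

/-- The type A alternating Eulerian number `Â(n,k)`. -/
def Ahat (n k : ℕ) : ℕ :=
  (Finset.univ.filter (fun π : Equiv.Perm (Fin n) => altdesA π = k)).card

/-- The type A alternating Eulerian polynomial `Â_n(x)` as a real function. -/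
noncomputable def Apoly (n : ℕ) (x : ℝ) : ℝ :=
  ∑ π : Equiv.Perm (Fin n), x ^ altdesA π

/-- The number of left peaks of a permutation: indices `1 ≤ i ≤ n-1` with
`π(i-1) < π(i) > π(i+1)`, where `π(0) = 0`. -/
def lpk {n : ℕ} (π : Equiv.Perm (Fin n)) : ℕ :=
  ((Finset.Icc 1 (n - 1)).filter (fun i =>
      aword π (i - 1) < aword π i ∧ aword π (i + 1) < aword π i)).card

/-- `M n k` is the number of permutations of `{1,…,n}` with exactly `k` left peaks. -/
def M (n k : ℕ) : ℕ :=
  (Finset.univ.filter (fun π : Equiv.Perm (Fin n) => lpk π = k)).card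

/-- The derivative polynomials for secant: `Q 0 = 1`,
`Q (n+1) = x Q n + (1+x²) (Q n)'`. -/
noncomputable def Q : ℕ → Polynomial ℝ
  | 0 => 1
  | n + 1 => Polynomial.X * Q n + (1 + Polynomial.X ^ 2) * Polynomial.derivative (Q n)

/-- The coefficients `ξ_{n,i}` (terms with negative index vanish). -/
def xi : ℕ → ℤ → ℤ
  | 0, i => if i = 0 then 1 else 0
  | n + 1, i => (1 + 2 * (n : ℤ) - 6 * i) * xi n i + ((n : ℤ) - 2 * i + 2) * xi n (i - 1)
      - 4 * (i + 1) * xi n (i + 1)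

/-- The polynomial `ξ_n(x) = Σ_{i=0}^{⌊n/2⌋} ξ_{n,i} x^i` as a real function. -/
noncomputable def xiPoly (n : ℕ) (x : ℝ) : ℝ :=
  ∑ i ∈ Finset.range (n / 2 + 1), (xi n i : ℝ) * x ^ i

/-- A snake: a signed permutation with `σ(0) < σ(1) > σ(2) < σ(3) > ⋯`. -/
def IsSnake {n : ℕ} (σ : BSigned n) : Prop :=
  ∀ i : ℕ, (2 * i + 1 ≤ n → bword σ (2 * i) < bword σ (2 * i + 1)) ∧
    (2 * i + 2 ≤ n → bword σ (2 * i + 2) < bword σ (2 * i + 1))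

/-- The Springer number `s_n`: the number of snakes of order `n`. -/
noncomputable def springer (n : ℕ) : ℕ := Nat.card {σ : BSigned n // IsSnake σ}

/-- An alternating (down-up) permutation: `π(1) > π(2) < π(3) > ⋯`. -/
def IsAlternating {m : ℕ} (π : Equiv.Perm (Fin m)) : Prop :=
  ∀ j : ℕ, 1 ≤ j → j + 1 ≤ m →
    (Odd j → aword π (j + 1) < aword π j) ∧ (Even j → aword π j < aword π (j + 1))

/-- The secant number `E_{2n}`: the number of alternating permutations of `{1,…,2n}`. -/
noncomputable def secantNumber (n : ℕ) : ℕ :=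
  Nat.card {π : Equiv.Perm (Fin (2 * n)) // IsAlternating π}


/- ### Auxiliary development for stmt7 ### -/

-- sign as integer
def sgnb (b : Bool) : ℤ := if b then -1 else 1

def fext {m : ℕ} (ε : Fin m → Bool) (k : ℕ) : Bool :=
  if h : k < m then ε ⟨k, h⟩ else false

lemma bword_eq_sgnb {n : ℕ} (π : Equiv.Perm (Fin n)) (ε : Fin n → Bool) (j : ℕ) (hj : j ≤ n) :
    bword (π, ε) j = sgnb (fext ε (j - 1)) * (aword π j : ℤ) := by
  unfold bword aword fext sgnb
  rcases Nat.eq_zero_or_pos j with h | h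
  · subst h; simp
  · have h1 : 1 ≤ j ∧ j ≤ n := ⟨h, hj⟩
    rw [dif_pos h1, dif_pos h1, dif_pos (by omega : j - 1 < n)]
    push_cast
    ring

lemma aword_eq {n : ℕ} (π : Equiv.Perm (Fin n)) (j : ℕ) (h1 : 1 ≤ j) (h2 : j ≤ n) :
    aword π j = (π ⟨j - 1, by omega⟩ : ℕ) + 1 := by
  unfold aword; rw [dif_pos ⟨h1, h2⟩]

lemma aword_pos {n : ℕ} (π : Equiv.Perm (Fin n)) (j : ℕ) (h1 : 1 ≤ j) (h2 : j ≤ n) :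
    1 ≤ aword π j := by rw [aword_eq π j h1 h2]; omega

lemma aword_zero {n : ℕ} (π : Equiv.Perm (Fin n)) : aword π 0 = 0 := by
  unfold aword; rw [dif_neg (by omega)]

lemma aword_ne {n : ℕ} (π : Equiv.Perm (Fin n)) (j j' : ℕ) (h1 : 1 ≤ j) (hjj : j < j')
    (h2 : j' ≤ n) : aword π j ≠ aword π j' := by
  rw [aword_eq π j h1 (by omega), aword_eq π j' (by omega) h2]
  intro h
  have : π ⟨j - 1, by omega⟩ = π ⟨j' - 1, by omega⟩ := by
    apply Fin.ext; omega
  have := π.injective this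
  have : j - 1 = j' - 1 := congrArg Fin.val this
  omega

lemma sgnb_mul_lt (b c : Bool) (u v : ℤ) (hu : 1 ≤ u) (hv : 1 ≤ v) :
    (sgnb b * u < sgnb c * v ↔
      (b = true ∧ c = false) ∨ (b = false ∧ c = false ∧ u < v) ∨
      (b = true ∧ c = true ∧ v < u)) := by
  cases b <;> cases c <;> simp [sgnb] <;> omega

@[simp] lemma sgnb_true : sgnb true = -1 := rfl
@[simp] lemma sgnb_false : sgnb false = 1 := rfl
/-- transfer vector recursion -/
def hv (h : Bool → ℝ) (W : ℕ → Bool → Bool → ℝ) : ℕ → Bool → ℝ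
  | 0 => h
  | i + 1 => fun c => ∑ b, hv h W i b * W i b c

lemma hv_shift (h : Bool → ℝ) (W : ℕ → Bool → Bool → ℝ) (i : ℕ) :
    hv (fun c => ∑ b, h b * W 0 b c) (fun j => W (j + 1)) i = hv h W (i + 1) := by
  induction i with
  | zero => rfl
  | succ i ih =>
    show (fun c => ∑ b, hv _ _ i b * W (i+1) b c) = fun c => ∑ b, hv h W (i+1) b * W (i+1) b c
    rw [ih]

lemma fext_cons_succ {m : ℕ} (b : Bool) (f : Fin m → Bool) (k : ℕ) :
    fext (Fin.cons b f : Fin (m+1) → Bool) (k + 1) = fext f k := by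
  unfold fext
  by_cases h : k < m
  · rw [dif_pos (by omega : k + 1 < m + 1), dif_pos h]
    have : (⟨k + 1, by omega⟩ : Fin (m + 1)) = Fin.succ ⟨k, h⟩ := rfl
    rw [this, Fin.cons_succ]
  · rw [dif_neg (by omega), dif_neg h]

lemma fext_zero {m : ℕ} (ε : Fin (m + 1) → Bool) : fext ε 0 = ε 0 := by
  unfold fext; rw [dif_pos (by omega)]; rfl

lemma transfer (m : ℕ) (h : Bool → ℝ) (W : ℕ → Bool → Bool → ℝ) :
    ∑ ε : Fin (m + 1) → Bool,
      (h (ε 0) * ∏ j ∈ range m, W j (fext ε j) (fext ε (j + 1))) = ∑ c, hv h W m c := by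
  induction m generalizing h W with
  | zero =>
    simp only [range_zero, prod_empty, mul_one]
    exact Fintype.sum_equiv (Equiv.funUnique (Fin 1) Bool) (fun ε => h (ε 0)) (fun b => hv h W 0 b)
      (fun ε => congrArg h (congrArg ε (Subsingleton.elim _ _)))
  | succ m ih =>
    rw [← Equiv.sum_comp (Fin.consEquiv (fun _ => Bool)) (M := ℝ)]
    rw [Fintype.sum_prod_type]
    have key : ∀ (b : Bool) (f : Fin (m + 1) → Bool),
        h ((Fin.consEquiv (fun _ => Bool)) (b, f) 0) *
          ∏ j ∈ range (m + 1), W j (fext ((Fin.consEquiv (fun _ => Bool)) (b, f)) j)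
            (fext ((Fin.consEquiv (fun _ => Bool)) (b, f)) (j + 1)) =
        (h b * W 0 b (f 0)) *
          ∏ j ∈ range m, W (j + 1) (fext f j) (fext f (j + 1)) := by
      intro b f
      have hc : (Fin.consEquiv (fun _ => Bool)) (b, f) = Fin.cons b f := rfl
      rw [hc, Finset.prod_range_succ']
      have e0 : fext (Fin.cons b f : Fin (m+2) → Bool) 0 = b := by
        rw [fext_zero]; simp
      have e1 : ∀ k, fext (Fin.cons b f : Fin (m+2) → Bool) (k + 1) = fext f k :=
        fun k => fext_cons_succ b f k
      rw [e0]
      have h0 : (Fin.cons b f : Fin (m+2) → Bool) 0 = b := by simp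
      rw [h0]
      simp only [e1]
      rw [fext_zero]
      ring
    simp only [key]
    have swap : ∀ f : Fin (m + 1) → Bool,
        ∑ b, ((h b * W 0 b (f 0)) * ∏ j ∈ range m, W (j + 1) (fext f j) (fext f (j + 1)))
        = (∑ b, h b * W 0 b (f 0)) * ∏ j ∈ range m, W (j + 1) (fext f j) (fext f (j + 1)) := by
      intro f; rw [Finset.sum_mul]
    rw [Finset.sum_comm]
    simp only [swap]
    rw [ih (fun c => ∑ b, h b * W 0 b c) (fun j => W (j + 1))]
    rw [hv_shift]

def Wf (n : ℕ) (π : Equiv.Perm (Fin n)) (x : ℝ) (j : ℕ) (b c : Bool) : ℝ :=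
  if (Even j ∧ sgnb b * (aword π j : ℤ) < sgnb c * (aword π (j + 1) : ℤ)) ∨
     (Odd j ∧ sgnb c * (aword π (j + 1) : ℤ) < sgnb b * (aword π j : ℤ)) then x else 1

def ascP (n : ℕ) (π : Equiv.Perm (Fin n)) (j : ℕ) : Prop := aword π j < aword π (j + 1)

instance {n π j} : Decidable (ascP n π j) := by unfold ascP; infer_instance

def Kc (n : ℕ) (π : Equiv.Perm (Fin n)) (i : ℕ) : ℕ :=
  ∑ t ∈ Icc 1 i, if ascP n π (t - 1) ∧ ¬ ascP n π t then 1 else 0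

def φv (i : ℕ) (c : Bool) (x : ℝ) : ℝ :=
  if Even i then (if c then 1 else x) else (if c then x else 1)

lemma Kc_succ (n : ℕ) (π : Equiv.Perm (Fin n)) (i : ℕ) :
    Kc n π (i + 1) = Kc n π i + (if ascP n π i ∧ ¬ ascP n π (i + 1) then 1 else 0) := by
  unfold Kc
  rw [Finset.sum_Icc_succ_top (by omega)]
  simp

lemma Wf_eval (n : ℕ) (π : Equiv.Perm (Fin n)) (x : ℝ) (j : ℕ) (h1 : 1 ≤ j)
    (h2 : j + 1 ≤ n) (b c : Bool) :
    Wf n π x j b c =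
      if Even j then
        (if b then (if c then (if ascP n π j then 1 else x) else x)
         else (if c then 1 else (if ascP n π j then x else 1)))
      else
        (if b then (if c then (if ascP n π j then x else 1) else 1)
         else (if c then x else (if ascP n π j then 1 else x))) := by
  have hne : aword π j ≠ aword π (j + 1) := aword_ne π j (j + 1) h1 (by omega) h2
  have hu : 1 ≤ aword π j := aword_pos π j h1 (by omega)
  have hv : 1 ≤ aword π (j + 1) := aword_pos π (j + 1) (by omega) h2
  have hu' : (1 : ℤ) ≤ (aword π j : ℤ) := by exact_mod_cast hu
  have hv' : (1 : ℤ) ≤ (aword π (j + 1) : ℤ) := by exact_mod_cast hv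
  unfold Wf
  have hA : ascP n π j ↔ aword π j < aword π (j+1) := Iff.rfl
  rcases Nat.even_or_odd j with he | ho
  · have hno : ¬ Odd j := by simp [Nat.not_odd_iff_even, he]
    by_cases ha : aword π j < aword π (j + 1) <;> cases b <;> cases c <;>
      · simp only [hA, he, hno, ha, sgnb_true, sgnb_false, true_and, false_and, and_true,
          and_false, or_false, false_or, if_true, if_false, Bool.false_eq_true,
          Bool.true_eq_false, not_true, not_false_iff, eq_self_iff_true]
        split_ifs with h <;> first | rfl | (exfalso; omega)
  · have hne' : ¬ Even j := by simp [Nat.not_even_iff_odd, ho]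
    by_cases ha : aword π j < aword π (j + 1) <;> cases b <;> cases c <;>
      · simp only [hA, ho, hne', ha, sgnb_true, sgnb_false, true_and, false_and, and_true,
          and_false, or_false, false_or, if_true, if_false, Bool.false_eq_true,
          Bool.true_eq_false, not_true, not_false_iff, eq_self_iff_true]
        split_ifs with h <;> first | rfl | (exfalso; omega)

lemma invariant (N : ℕ) (π : Equiv.Perm (Fin (N + 1))) (x : ℝ) :
    ∀ i, i ≤ N →
      (ascP (N+1) π i → 2 * Kc (N+1) π i ≤ i ∧ ∀ c,
        hv (fun c => Wf (N+1) π x 0 c c) (fun j => Wf (N+1) π x (j + 1)) i c =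
          2 ^ Kc (N+1) π i * (1 + x^2) ^ Kc (N+1) π i * (1 + x) ^ (i - 2 * Kc (N+1) π i)
            * φv i c x)
      ∧ (¬ ascP (N+1) π i → (1 ≤ Kc (N+1) π i ∧ 2 * Kc (N+1) π i ≤ i + 1) ∧ ∀ c,
        hv (fun c => Wf (N+1) π x 0 c c) (fun j => Wf (N+1) π x (j + 1)) i c =
          2 ^ (Kc (N+1) π i - 1) * (1 + x^2) ^ Kc (N+1) π i
            * (1 + x) ^ (i + 1 - 2 * Kc (N+1) π i)) := by
  intro i
  induction i with
  | zero =>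
    intro _
    have hasc : ascP (N+1) π 0 := by
      unfold ascP
      rw [aword_zero]
      exact aword_pos π 1 le_rfl (by omega)
    have hK : Kc (N+1) π 0 = 0 := by simp [Kc]
    refine ⟨fun _ => ⟨by omega, fun c => ?_⟩, fun h => absurd hasc h⟩
    show Wf (N+1) π x 0 c c = _
    rw [hK]
    unfold Wf φv
    have h0 : aword π 0 = 0 := aword_zero π
    have h1 : 1 ≤ aword π 1 := aword_pos π 1 le_rfl (by omega)
    cases c
    · rw [if_pos]
      · norm_num
      · left
        refine ⟨Even.zero, ?_⟩
        rw [h0]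
        simp
        exact_mod_cast h1
    · rw [if_neg]
      · norm_num
      · rintro (⟨-, hlt⟩ | ⟨hodd, -⟩)
        · rw [h0] at hlt
          simp at hlt
          have : (1:ℤ) ≤ (aword π 1 : ℤ) := by exact_mod_cast h1
          omega
        · exact (Nat.not_odd_iff_even.mpr Even.zero) hodd
  | succ i ih =>
    intro hi
    have IH := ih (by omega)
    have hK1 := Kc_succ (N+1) π i
    have hvstep : ∀ c, hv (fun c => Wf (N+1) π x 0 c c) (fun j => Wf (N+1) π x (j + 1)) (i+1) c
        = hv (fun c => Wf (N+1) π x 0 c c) (fun j => Wf (N+1) π x (j + 1)) i true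
            * Wf (N+1) π x (i+1) true c
          + hv (fun c => Wf (N+1) π x 0 c c) (fun j => Wf (N+1) π x (j + 1)) i false
            * Wf (N+1) π x (i+1) false c := by
      intro c
      show (∑ b, _) = _
      rw [Fintype.sum_bool]
    have hWe : ∀ b c, Wf (N+1) π x (i+1) b c = _ :=
      fun b c => Wf_eval (N+1) π x (i+1) (by omega) (by omega) b c
    set K := Kc (N+1) π i with hKdef
    by_cases hA : ascP (N+1) π i <;> by_cases hB : ascP (N+1) π (i+1)
    · -- asc, asc : K' = K
      have hK' : Kc (N+1) π (i+1) = K := by rw [hK1]; simp [hA, hB]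
      obtain ⟨hbd, hval⟩ := IH.1 hA
      refine ⟨fun _ => ⟨by omega, fun c => ?_⟩, fun h => absurd hB h⟩
      rw [hvstep c, hval true, hval false, hWe true c, hWe false c, hK']
      have e1 : i + 1 - 2 * K = (i - 2 * K) + 1 := by omega
      rw [e1, pow_succ]
      rcases Nat.even_or_odd i with pe | po
      · have pne : ¬ Even (i+1) := by simp [Nat.even_add_one, pe]
        cases c <;> simp [φv, pe, pne, hB] <;> ring
      · have pne : ¬ Even i := by simp [Nat.not_even_iff_odd, po]
        have pe1 : Even (i+1) := by simp [Nat.even_add_one, pne]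
        cases c <;> simp [φv, pe1, pne, hB] <;> ring
    · -- asc, desc : peak, K' = K + 1
      have hK' : Kc (N+1) π (i+1) = K + 1 := by rw [hK1]; simp [hA, hB]
      obtain ⟨hbd, hval⟩ := IH.1 hA
      refine ⟨fun h => absurd h hB, fun _ => ⟨⟨by omega, by omega⟩, fun c => ?_⟩⟩
      rw [hvstep c, hval true, hval false, hWe true c, hWe false c, hK']
      have e1 : i + 1 + 1 - 2 * (K + 1) = i - 2 * K := by omega
      have e2 : K + 1 - 1 = K := by omega
      rw [e1, e2, pow_succ]
      rcases Nat.even_or_odd i with pe | po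
      · have pne : ¬ Even (i+1) := by simp [Nat.even_add_one, pe]
        cases c <;> simp [φv, pe, pne, hB] <;> ring
      · have pne : ¬ Even i := by simp [Nat.not_even_iff_odd, po]
        have pe1 : Even (i+1) := by simp [Nat.even_add_one, pne]
        cases c <;> simp [φv, pe1, pne, hB] <;> ring
    · -- desc, asc : K' = K, need K ≥ 1
      have hK' : Kc (N+1) π (i+1) = K := by rw [hK1]; simp [hA]
      obtain ⟨⟨hb1, hb2⟩, hval⟩ := IH.2 hA
      refine ⟨fun _ => ⟨by omega, fun c => ?_⟩, fun h => absurd hB h⟩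
      rw [hvstep c, hval true, hval false, hWe true c, hWe false c, hK']
      have e1 : K = (K - 1) + 1 := by omega
      rw [show (2:ℝ)^K = 2^(K-1) * 2 by rw [← pow_succ]; congr 1; try omega]
      rcases Nat.even_or_odd i with pe | po
      · have pne : ¬ Even (i+1) := by simp [Nat.even_add_one, pe]
        cases c <;> simp [φv, pe, pne, hB] <;> ring
      · have pne : ¬ Even i := by simp [Nat.not_even_iff_odd, po]
        have pe1 : Even (i+1) := by simp [Nat.even_add_one, pne]
        cases c <;> simp [φv, pe1, pne, hB] <;> ring
    · -- desc, desc : K' = K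
      have hK' : Kc (N+1) π (i+1) = K := by rw [hK1]; simp [hA]
      obtain ⟨⟨hb1, hb2⟩, hval⟩ := IH.2 hA
      refine ⟨fun h => absurd h hB, fun _ => ⟨⟨by omega, by omega⟩, fun c => ?_⟩⟩
      rw [hvstep c, hval true, hval false, hWe true c, hWe false c, hK']
      have e1 : i + 1 + 1 - 2 * K = (i + 1 - 2 * K) + 1 := by omega
      rw [e1, pow_succ]
      rcases Nat.even_or_odd i with pe | po
      · have pne : ¬ Even (i+1) := by simp [Nat.even_add_one, pe]
        cases c <;> simp [φv, pe, pne, hB] <;> ring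
      · have pne : ¬ Even i := by simp [Nat.not_even_iff_odd, po]
        have pe1 : Even (i+1) := by simp [Nat.even_add_one, pne]
        cases c <;> simp [φv, pe1, pne, hB] <;> ring

lemma pow_altdes {n : ℕ} (π : Equiv.Perm (Fin n)) (ε : Fin n → Bool) (x : ℝ) :
    x ^ altdesB (π, ε) = ∏ j ∈ range n, Wf n π x j (fext ε (j - 1)) (fext ε j) := by
  unfold altdesB
  rw [Finset.card_filter, ← Finset.prod_pow_eq_pow_sum]
  refine Finset.prod_congr rfl (fun j hj => ?_)
  have hj' : j < n := mem_range.mp hj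
  unfold Wf
  rw [bword_eq_sgnb π ε j (by omega), bword_eq_sgnb π ε (j + 1) (by omega)]
  have : (j + 1) - 1 = j := by omega
  rw [this]
  split_ifs with h
  · rw [pow_one]
  · rw [pow_zero]

lemma perPi (N : ℕ) (π : Equiv.Perm (Fin (N+1))) (x : ℝ) :
    (∑ ε : Fin (N+1) → Bool, x ^ altdesB (π, ε)) =
      2 ^ Kc (N+1) π N * (1 + x^2) ^ Kc (N+1) π N
        * (1 + x) ^ (N + 1 - 2 * Kc (N+1) π N) := by
  have step1 : ∀ ε : Fin (N+1) → Bool, x ^ altdesB (π, ε) =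
      (fun c => Wf (N+1) π x 0 c c) (ε 0) *
        ∏ j ∈ range N, Wf (N+1) π x (j+1) (fext ε j) (fext ε (j+1)) := by
    intro ε
    rw [pow_altdes π ε x, Finset.prod_range_succ']
    rw [mul_comm]
    congr 1
  simp_rw [step1]
  rw [transfer N (fun c => Wf (N+1) π x 0 c c) (fun j => Wf (N+1) π x (j+1))]
  rw [Fintype.sum_bool]
  by_cases hA : ascP (N+1) π N
  · obtain ⟨hbd, hval⟩ := (invariant N π x N le_rfl).1 hA
    rw [hval true, hval false]
    have e1 : N + 1 - 2 * Kc (N+1) π N = (N - 2 * Kc (N+1) π N) + 1 := by omega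
    rw [e1, pow_succ]
    rcases Nat.even_or_odd N with pe | po
    · simp [φv, pe]; ring
    · have pne : ¬ Even N := by simp [Nat.not_even_iff_odd, po]
      simp [φv, pne]; ring
  · obtain ⟨⟨hb1, hb2⟩, hval⟩ := (invariant N π x N le_rfl).2 hA
    rw [hval true, hval false]
    rw [show (2:ℝ) ^ Kc (N+1) π N = 2 ^ (Kc (N+1) π N - 1) * 2 by
      rw [← pow_succ]; congr 1; try omega]
    ring

lemma Kc_le (N : ℕ) (π : Equiv.Perm (Fin (N+1))) : 2 * Kc (N+1) π N ≤ N + 1 := by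
  by_cases hA : ascP (N+1) π N
  · have := ((invariant N π 0 N le_rfl).1 hA).1; omega
  · have := ((invariant N π 0 N le_rfl).2 hA).1; omega

lemma lpk_eq_Kc (N : ℕ) (π : Equiv.Perm (Fin (N+1))) : lpk π = Kc (N+1) π N := by
  unfold lpk Kc
  rw [Finset.card_filter]
  rw [show (N + 1 - 1) = N from rfl]
  refine Finset.sum_congr rfl (fun t ht => ?_)
  obtain ⟨ht1, ht2⟩ := Finset.mem_Icc.mp ht
  have hne : aword π t ≠ aword π (t + 1) := aword_ne π t (t+1) ht1 (by omega) (by omega)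
  congr 1
  have h1 : ascP (N+1) π (t - 1) ↔ aword π (t - 1) < aword π t := by
    unfold ascP; rw [show t - 1 + 1 = t from by omega]
  have h2 : ¬ ascP (N+1) π t ↔ aword π (t + 1) < aword π t := by
    unfold ascP; omega
  rw [eq_iff_iff, h1, h2]


/-- the combinatorial expansion
`B̂_n(x) = Σ_{k=0}^{⌊n/2⌋} 2^k M(n,k) (1+x²)^k (1+x)^{n-2k}`. -/
theorem stmt7 (n : ℕ) (x : ℝ) :
    Bpoly n x =
      ∑ k ∈ Finset.range (n / 2 + 1),
        2 ^ k * (M n k : ℝ) * (1 + x ^ 2) ^ k * (1 + x) ^ (n - 2 * k) := by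
  cases n with
  | zero =>
    have hM : M 0 0 = 1 := by
      unfold M
      rw [Finset.filter_true_of_mem (fun π _ => by simp [lpk])]
      rw [Finset.card_univ]
      simp
    have hB : Bpoly 0 x = 1 := by
      unfold Bpoly
      have : ∀ σ : BSigned 0, altdesB σ = 0 := fun σ => by simp [altdesB]
      simp only [this, pow_zero]
      rw [Finset.sum_const, Finset.card_univ]
      simp [Fintype.card_prod]
    rw [hB]
    simp [hM]
  | succ N =>
    have key : Bpoly (N+1) x = ∑ π : Equiv.Perm (Fin (N+1)),
        2 ^ lpk π * (1 + x^2) ^ lpk π * (1 + x) ^ (N + 1 - 2 * lpk π) := by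
      unfold Bpoly
      rw [Fintype.sum_prod_type]
      refine Finset.sum_congr rfl (fun π _ => ?_)
      rw [perPi N π x, lpk_eq_Kc N π]
    rw [key]
    rw [← Finset.sum_fiberwise_of_maps_to (g := lpk) (t := Finset.range ((N+1)/2+1))
      (fun π _ => Finset.mem_range.mpr (by
        have h1 := Kc_le N π
        have h2 := lpk_eq_Kc N π
        omega))
      (fun π => 2 ^ lpk π * (1 + x^2) ^ lpk π * (1 + x) ^ (N + 1 - 2 * lpk π))]
    refine Finset.sum_congr rfl (fun k hk => ?_)
    rw [Finset.sum_congr rfl (fun π hπ => by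
      rw [(Finset.mem_filter.mp hπ).2])]
    rw [Finset.sum_const]
    rw [nsmul_eq_mul]
    unfold M
    ring
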